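/- arXiv:1203.6198 — 2 statements merged into one kernel-verified Lean document; each statement's English description precedes it below -/
import Mathlib

section
/- Let (F, θ) be a field equipped with a higher derivation, and let L/F be a finitely generated separable field extension with separating transcendence basis x_1, …, x_k (i.e. x_1, …, x_k are algebraically independent over F and L is a finite separable extension of F(x_1, …, x_k)). Then for any choice of elements ξ_{i,n} ∈ L (for i = 1, …, k and n ≥ 1) there exists a unique higher derivation θ_L : L → L[[T]] extending θ (i.e. θ_L(a) equals the image of θ(a) in L[[T]] for all a ∈ F) and satisfying θ_L(x_i) = x_i + Σ_{n=1}^∞ ξ_{i,n} T^n for all i = 1, …, k. -/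
open PowerSeries




/-- A higher derivation on a commutative ring `R` is a ring homomorphism
`θ : R → R[[T]]` such that the constant term of `θ r` is `r` for every `r`. -/
def IsHigherDerivation {R : Type*} [CommRing R] (θ : R →+* PowerSeries R) : Prop :=
  ∀ r : R, PowerSeries.constantCoeff (R := R) (θ r) = r


private lemma hd_mem_pow {L : Type*} [Field L] (n : ℕ) (z : PowerSeries L) :
    z ∈ (Ideal.span {(X : PowerSeries L)})^n ↔ ∀ m < n, coeff (R := L) m z = 0 := by
  rw [Ideal.span_singleton_pow, Ideal.mem_span_singleton]
  exact PowerSeries.X_pow_dvd_iff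

private lemma hd_eq_of_forall {L : Type*} [Field L] (z w : PowerSeries L)
    (h : ∀ n : ℕ, Ideal.Quotient.mk ((Ideal.span {(X : PowerSeries L)})^(n+1)) z
      = Ideal.Quotient.mk ((Ideal.span {(X : PowerSeries L)})^(n+1)) w) : z = w := by
  ext j
  have := (hd_mem_pow (j+1) (z - w)).1 (Ideal.Quotient.eq.1 (h j)) j (Nat.lt_succ_self j)
  rw [map_sub, sub_eq_zero] at this
  exact this

universe u
set_option maxHeartbeats 1000000 in
theorem hd_core {K L : Type u} [Field K] [Field L] [Algebra K L] [Algebra.IsSeparable K L]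
    (σ : K →+* PowerSeries L)
    (hσ : ∀ c, constantCoeff (R := L) (σ c) = algebraMap K L c) :
    ∃! τ : L →+* PowerSeries L,
      (∀ a, constantCoeff (R := L) (τ a) = a) ∧ ∀ c, τ (algebraMap K L c) = σ c := by
  classical
  haveI : Algebra.FormallyEtale K L := Algebra.FormallyEtale.of_isSeparable K L
  letI : Algebra K (PowerSeries L) := σ.toAlgebra
  set A := PowerSeries L
  set I : Ideal A := Ideal.span {(X : A)} with hI
  -- the base algebra hom to A⧸I
  have hmemI : ∀ z : A, z ∈ I ↔ constantCoeff (R := L) z = 0 := fun z => by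
    rw [hI, Ideal.mem_span_singleton, PowerSeries.X_dvd_iff]
  have galg : ∀ c : K, Ideal.Quotient.mk I ((C (R := L)) (algebraMap K L c))
      = algebraMap K (A ⧸ I) c := by
    intro c
    have : algebraMap K (A ⧸ I) c = Ideal.Quotient.mk I (σ c) := rfl
    rw [this, Ideal.Quotient.eq]
    rw [hmemI, map_sub, hσ, PowerSeries.constantCoeff_C, sub_self]
  set g : L →ₐ[K] A ⧸ I :=
    { toRingHom := (Ideal.Quotient.mk I).comp (C (R := L))
      commutes' := galg } with hg
  -- nilpotent ideals in the truncated quotients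
  set J : ∀ n : ℕ, Ideal (A ⧸ I^(n+1)) := fun n => I.map (Ideal.Quotient.mk (I^(n+1))) with hJdef
  have hJ : ∀ n, IsNilpotent (J n) := fun n =>
    ⟨n+1, by rw [hJdef, ← Ideal.map_pow, Ideal.map_quotient_self]; rfl⟩
  have hle : ∀ n : ℕ, I^(n+1) ≤ I := fun n => Ideal.pow_le_self (Nat.succ_ne_zero n)
  set e : ∀ n : ℕ, ((A ⧸ I^(n+1)) ⧸ (J n)) ≃+* A ⧸ I :=
    fun n => DoubleQuot.quotQuotEquivQuotOfLE (hle n) with hedef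
  have he_mk : ∀ (n : ℕ) (z : A),
      e n (Ideal.Quotient.mk (J n) (Ideal.Quotient.mk (I^(n+1)) z)) = Ideal.Quotient.mk I z :=
    fun n z => DoubleQuot.quotQuotEquivQuotOfLE_quotQuotMk z (hle n)
  -- the base map into the double quotient
  have gqalg : ∀ (n : ℕ) (c : K),
      (e n).symm (g (algebraMap K L c)) = algebraMap K ((A ⧸ I^(n+1)) ⧸ (J n)) c := by
    intro n c
    have h1 : g (algebraMap K L c) = Ideal.Quotient.mk I (σ c) := by
      rw [g.commutes]; rfl
    have h2 : algebraMap K ((A ⧸ I^(n+1)) ⧸ (J n)) c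
        = Ideal.Quotient.mk (J n) (Ideal.Quotient.mk (I^(n+1)) (σ c)) := rfl
    rw [h1, h2, ← he_mk n (σ c), RingEquiv.symm_apply_apply]
  set gq : ∀ n : ℕ, L →ₐ[K] ((A ⧸ I^(n+1)) ⧸ (J n)) := fun n =>
    { toRingHom := ((e n).symm : (A ⧸ I) →+* _).comp g.toRingHom
      commutes' := fun c => by exact gqalg n c } with hgq
  -- the lifts
  set f : ∀ n : ℕ, L →ₐ[K] (A ⧸ I^(n+1)) := fun n =>
    Algebra.FormallySmooth.lift (J n) (hJ n) (gq n) with hf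
  have hf_mk : ∀ (n : ℕ) (a : L),
      Ideal.Quotient.mk (J n) (f n a) = (e n).symm (g a) := by
    intro n a
    rw [hf]
    exact Algebra.FormallySmooth.mk_lift (J n) (hJ n) (gq n) a
  -- key : a preimage of `f n a` reduces to `g a` mod I
  have key : ∀ (n : ℕ) (a : L) (z : A),
      Ideal.Quotient.mk (I^(n+1)) z = f n a → Ideal.Quotient.mk I z = g a := by
    intro n a z h
    have := congrArg (Ideal.Quotient.mk (J n)) h
    rw [hf_mk] at this
    have := congrArg (e n) this
    rwa [he_mk, RingEquiv.apply_symm_apply] at this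
  -- compatibility of the lifts
  have hcompat : ∀ (m n : ℕ) (hmn : m ≤ n), ∀ a : L,
      Ideal.Quotient.factor (S := I^(n+1)) (T := I^(m+1))
        (Ideal.pow_le_pow_right (Nat.succ_le_succ hmn)) (f n a) = f m a := by
    intro m n hmn
    set fac : A ⧸ I^(n+1) →+* A ⧸ I^(m+1) :=
      Ideal.Quotient.factor (S := I^(n+1)) (T := I^(m+1))
        (Ideal.pow_le_pow_right (Nat.succ_le_succ hmn)) with hfacdef
    have hfac : ∀ c : K,
        fac (algebraMap K (A ⧸ I^(n+1)) c) = algebraMap K (A ⧸ I^(m+1)) c := by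
      intro c
      have h1 : algebraMap K (A ⧸ I^(n+1)) c = Ideal.Quotient.mk (I^(n+1)) (σ c) := rfl
      have h2 : algebraMap K (A ⧸ I^(m+1)) c = Ideal.Quotient.mk (I^(m+1)) (σ c) := rfl
      rw [h1, h2, hfacdef, Ideal.Quotient.factor_mk]
    set φ : L →ₐ[K] A ⧸ I^(m+1) :=
      { toRingHom := fac.comp (f n).toRingHom
        commutes' := fun c => by
          show fac (f n (algebraMap K L c)) = _
          rw [(f n).commutes]
          exact hfac c } with hφ
    have hφeq : φ = f m := by
      apply Algebra.FormallyUnramified.lift_unique (J m) (hJ m)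
      ext a
      obtain ⟨z, hz⟩ := Ideal.Quotient.mk_surjective (f n a)
      apply (e m).injective
      show e m (Ideal.Quotient.mk (J m) (φ a)) = e m (Ideal.Quotient.mk (J m) (f m a))
      have hφa : φ a = Ideal.Quotient.mk (I^(m+1)) z := by
        show fac (f n a) = _
        rw [← hz, hfacdef, Ideal.Quotient.factor_mk]
      rw [hφa, hf_mk, he_mk, RingEquiv.apply_symm_apply]
      exact key n a z hz
    intro a
    exact DFunLike.congr_fun hφeq a
  -- choose preimages
  set p : ℕ → L → A := fun n a => (Ideal.Quotient.mk_surjective (f n a)).choose with hpdef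
  have hp : ∀ (n : ℕ) (a : L), Ideal.Quotient.mk (I^(n+1)) (p n a) = f n a :=
    fun n a => (Ideal.Quotient.mk_surjective (f n a)).choose_spec
  have hcoeff : ∀ (a : L) (j m n : ℕ), j ≤ m → m ≤ n →
      coeff (R := L) j (p m a) = coeff (R := L) j (p n a) := by
    intro a j m n hjm hmn
    have hmem : p m a - p n a ∈ I^(m+1) := by
      rw [← Ideal.Quotient.eq, hp]
      rw [← hcompat m n hmn a, ← hp n a, Ideal.Quotient.factor_mk]
    have := (hd_mem_pow (m+1) (p m a - p n a)).1 hmem j (by omega)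
    rw [map_sub, sub_eq_zero] at this
    exact this
  -- the limit function
  set τ0 : L → A := fun a => PowerSeries.mk (fun j => coeff (R := L) j (p j a)) with hτ0def
  have hτ0 : ∀ (n : ℕ) (a : L), Ideal.Quotient.mk (I^(n+1)) (τ0 a) = f n a := by
    intro n a
    rw [← hp n a, Ideal.Quotient.eq]
    rw [hd_mem_pow]
    intro j hj
    rw [map_sub, sub_eq_zero, hτ0def]
    simp only [PowerSeries.coeff_mk]
    exact hcoeff a j j n (le_refl j) (by omega)
  have hzero : ∀ z w : A,
      (∀ n : ℕ, Ideal.Quotient.mk (I^(n+1)) z = Ideal.Quotient.mk (I^(n+1)) w) → z = w :=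
    fun z w h => hd_eq_of_forall z w h
  -- τ0 is a ring hom
  set τ : L →+* A :=
    { toFun := τ0
      map_one' := hzero _ _ (fun n => by
        rw [hτ0 n 1, (Ideal.Quotient.mk (I^(n+1))).map_one]
        exact (f n).toRingHom.map_one)
      map_mul' := fun a b => hzero _ _ (fun n => by
        rw [hτ0 n (a*b), (Ideal.Quotient.mk (I^(n+1))).map_mul, hτ0 n a, hτ0 n b]
        exact (f n).toRingHom.map_mul a b)
      map_zero' := hzero _ _ (fun n => by
        rw [hτ0 n 0, (Ideal.Quotient.mk (I^(n+1))).map_zero]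
        exact (f n).toRingHom.map_zero)
      map_add' := fun a b => hzero _ _ (fun n => by
        rw [hτ0 n (a+b), (Ideal.Quotient.mk (I^(n+1))).map_add, hτ0 n a, hτ0 n b]
        exact (f n).toRingHom.map_add a b) } with hτdef
  -- constant coefficient
  have hτI : ∀ (a : L) (z : A), Ideal.Quotient.mk I z = g a → constantCoeff (R := L) z = a := by
    intro a z h
    have hg : g a = Ideal.Quotient.mk I ((C (R := L)) a) := rfl
    rw [hg, Ideal.Quotient.eq, hmemI, map_sub, PowerSeries.constantCoeff_C,
      sub_eq_zero] at h
    exact h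
  have hτconst : ∀ a : L, constantCoeff (R := L) (τ a) = a := by
    intro a
    exact hτI a (τ a) (key 0 a (τ a) (hτ0 0 a))
  have hτext : ∀ c : K, τ (algebraMap K L c) = σ c := by
    intro c
    apply hzero
    intro n
    show Ideal.Quotient.mk (I^(n+1)) (τ0 (algebraMap K L c)) = _
    rw [hτ0, (f n).commutes]
    rfl
  refine ⟨τ, ⟨hτconst, hτext⟩, ?_⟩
  rintro τ' ⟨h1, h2⟩
  have hτ'I : ∀ a : L, Ideal.Quotient.mk I (τ' a) = g a := by
    intro a
    have hg2 : g a = Ideal.Quotient.mk I ((C (R := L)) a) := rfl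
    rw [hg2, Ideal.Quotient.eq, hmemI, map_sub, PowerSeries.constantCoeff_C, h1,
      sub_self]
  set τ'a : L →ₐ[K] A :=
    { toRingHom := τ'
      commutes' := fun c => by exact h2 c } with hτ'a
  have hτ'n : ∀ (n : ℕ) (a : L), Ideal.Quotient.mk (I^(n+1)) (τ' a) = f n a := by
    intro n
    have heq : (Ideal.Quotient.mkₐ K (I^(n+1))).comp τ'a = f n := by
      apply Algebra.FormallyUnramified.lift_unique (J n) (hJ n)
      ext a
      apply (e n).injective
      show e n (Ideal.Quotient.mk (J n) (Ideal.Quotient.mk (I^(n+1)) (τ' a)))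
        = e n (Ideal.Quotient.mk (J n) (f n a))
      rw [he_mk, hf_mk, RingEquiv.apply_symm_apply]
      exact hτ'I a
    intro a
    exact DFunLike.congr_fun heq a
  apply RingHom.ext
  intro a
  exact hzero (τ' a) (τ a) (fun n => by rw [hτ'n n a]; exact (hτ0 n a).symm)

private lemma hd_inv_uniq {R : Type*} [CommMonoid R] {a b c : R}
    (h1 : a * b = 1) (h2 : a * c = 1) : b = c := by
  calc b = b * (a * c) := by rw [h2, mul_one]
    _ = (a * b) * c := by rw [← mul_assoc, mul_comm b a]
    _ = c := by rw [h1, one_mul]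

/-- let `(F, θ)` be an HD-field and `L/F` a finitely generated separable
field extension with separating transcendence basis `x_1, …, x_k` (the `x_i` are
algebraically independent over `F`, and `L` is finite and separable over
`F(x_1, …, x_k)`).  Then for any choice of elements `ξ_{i,n} ∈ L` (`1 ≤ i ≤ k`,
`n ≥ 1`) there is a unique higher derivation `θ_L` on `L` extending `θ` and
satisfying `θ_L(x_i) = x_i + Σ_{n≥1} ξ_{i,n} T^n` for all `i`. -/
theorem torsion_group_schemes_stmt_2 {F L : Type*} [Field F] [Field L] [Algebra F L]
    (θ : F →+* PowerSeries F) (hθ : IsHigherDerivation θ)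
    (k : ℕ) (x : Fin k → L) (hx : AlgebraicIndependent F x)
    (hfin : FiniteDimensional (IntermediateField.adjoin F (Set.range x)) L)
    (hsep : Algebra.IsSeparable (IntermediateField.adjoin F (Set.range x)) L)
    (ξ : Fin k → ℕ → L) :
    ∃! θL : L →+* PowerSeries L,
      IsHigherDerivation θL ∧
      (∀ a : F, θL (algebraMap F L a) = PowerSeries.map (algebraMap F L) (θ a)) ∧
      (∀ i : Fin k,
        θL (x i) = PowerSeries.mk (fun n => if n = 0 then x i else ξ i n)) := by
  classical
  set K := IntermediateField.adjoin F (Set.range x) with hK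
  set P := MvPolynomial (Fin k) F with hP
  set s : Fin k → PowerSeries L :=
    fun i => PowerSeries.mk fun n => if n = 0 then x i else ξ i n with hs
  set ψ : P →+* PowerSeries L :=
    MvPolynomial.eval₂Hom ((PowerSeries.map (algebraMap F L)).comp θ) s with hψ
  have hconst : ∀ p : P, constantCoeff (R := L) (ψ p) = MvPolynomial.aeval x p := by
    intro p
    have : (constantCoeff (R := L)).comp ψ
        = (MvPolynomial.aeval x : MvPolynomial (Fin k) F →ₐ[F] L).toRingHom := by
      apply MvPolynomial.ringHom_ext
      · intro a
        simp only [hψ, RingHom.comp_apply, MvPolynomial.eval₂Hom_C, AlgHom.toRingHom_eq_coe,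
          RingHom.coe_coe, MvPolynomial.aeval_C]
        rw [← PowerSeries.coeff_zero_eq_constantCoeff_apply, PowerSeries.coeff_map,
          PowerSeries.coeff_zero_eq_constantCoeff_apply, hθ]
      · intro i
        simp only [hψ, RingHom.comp_apply, MvPolynomial.eval₂Hom_X', AlgHom.toRingHom_eq_coe,
          RingHom.coe_coe, MvPolynomial.aeval_X, hs]
        rw [← PowerSeries.coeff_zero_eq_constantCoeff_apply, PowerSeries.coeff_mk]
        simp
    exact DFunLike.congr_fun this p
  have hinj : Function.Injective (MvPolynomial.aeval x : P →ₐ[F] L) :=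
    algebraicIndependent_iff_injective_aeval.1 hx
  have hunit : ∀ q : nonZeroDivisors P, IsUnit (ψ q) := by
    intro q
    rw [PowerSeries.isUnit_iff_constantCoeff, hconst]
    have hq0 : (q : P) ≠ 0 := nonZeroDivisors.coe_ne_zero q
    have : MvPolynomial.aeval x (q : P) ≠ 0 := fun h =>
      hq0 (hinj (by rw [h, map_zero]))
    exact this.isUnit
  set Θ : FractionRing P →+* PowerSeries L :=
    IsLocalization.lift (M := nonZeroDivisors P) hunit with hΘ
  have hΘalg : ∀ q : P, Θ (algebraMap P (FractionRing P) q) = ψ q := fun q =>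
    IsLocalization.lift_eq hunit q
  set σ : K →+* PowerSeries L := Θ.comp hx.aevalEquivField.symm.toAlgHom.toRingHom with hσdef
  have hxmem : ∀ i, x i ∈ K := fun i => IntermediateField.subset_adjoin F _ ⟨i, rfl⟩
  -- σ extends θ
  have hσF : ∀ a : F, σ (algebraMap F K a) = PowerSeries.map (algebraMap F L) (θ a) := by
    intro a
    have h1 : hx.aevalEquivField.symm (algebraMap F K a)
        = algebraMap F (FractionRing P) a := AlgEquiv.commutes _ a
    have h2 : algebraMap F (FractionRing P) a
        = algebraMap P (FractionRing P) (MvPolynomial.C a) := by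
      rw [IsScalarTower.algebraMap_apply F P (FractionRing P) a, MvPolynomial.algebraMap_eq]
    show Θ (hx.aevalEquivField.symm (algebraMap F K a)) = _
    rw [h1, h2, hΘalg]
    exact MvPolynomial.eval₂Hom_C _ _ a
  -- σ sends the xᵢ to the prescribed series
  have hσx : ∀ i : Fin k, σ (⟨x i, hxmem i⟩ : K) = s i := by
    intro i
    have h1 : hx.aevalEquivField (algebraMap P (FractionRing P) (MvPolynomial.X i))
        = (⟨x i, hxmem i⟩ : K) := by
      apply Subtype.ext
      rw [hx.aevalEquivField_algebraMap_apply_coe]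
      simp
    have h2 : hx.aevalEquivField.symm (⟨x i, hxmem i⟩ : K)
        = algebraMap P (FractionRing P) (MvPolynomial.X i) := by
      rw [← h1, AlgEquiv.symm_apply_apply]
    show Θ (hx.aevalEquivField.symm (⟨x i, hxmem i⟩ : K)) = s i
    rw [h2, hΘalg]
    exact MvPolynomial.eval₂Hom_X' _ _ i
  -- σ is a higher-derivation-style section over K
  have hσc : ∀ c : K, constantCoeff (R := L) (σ c) = algebraMap K L c := by
    intro c
    have hhom : (constantCoeff (R := L)).comp Θ
        = (algebraMap K L).comp hx.aevalEquivField.toAlgHom.toRingHom := by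
      apply IsLocalization.ringHom_ext (nonZeroDivisors P)
      apply RingHom.ext
      intro q
      show constantCoeff (R := L) (Θ (algebraMap P (FractionRing P) q))
        = algebraMap K L (hx.aevalEquivField (algebraMap P (FractionRing P) q))
      rw [hΘalg, hconst]
      exact (hx.aevalEquivField_algebraMap_apply_coe q).symm
    calc constantCoeff (R := L) (σ c)
        = ((constantCoeff (R := L)).comp Θ) (hx.aevalEquivField.symm c) := rfl
      _ = ((algebraMap K L).comp hx.aevalEquivField.toAlgHom.toRingHom)
            (hx.aevalEquivField.symm c) := by rw [hhom]
      _ = algebraMap K L (hx.aevalEquivField (hx.aevalEquivField.symm c)) := rfl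
      _ = algebraMap K L c := by rw [AlgEquiv.apply_symm_apply]
  obtain ⟨τ, ⟨hτ1, hτ2⟩, huniq⟩ := hd_core σ hσc
  refine ⟨τ, ⟨hτ1, ?_, ?_⟩, ?_⟩
  · intro a
    rw [IsScalarTower.algebraMap_apply F K L a, hτ2, hσF]
  · intro i
    show τ (algebraMap K L (⟨x i, hxmem i⟩ : K)) = _
    rw [hτ2, hσx]
  · rintro τ' ⟨h1', h2', h3'⟩
    apply huniq
    refine ⟨h1', ?_⟩
    intro c
    obtain ⟨y, hy⟩ := c
    show τ' y = σ ⟨y, hy⟩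
    induction hy using IntermediateField.adjoin_induction with
    | mem y hy' =>
      obtain ⟨i, rfl⟩ := hy'
      rw [h3' i]
      exact (hσx i).symm
    | algebraMap a =>
      rw [h2' a]
      have : (⟨algebraMap F L a, IntermediateField.algebraMap_mem K a⟩ : K)
          = algebraMap F K a :=
        Subtype.ext ((IsScalarTower.algebraMap_apply F K L a).symm)
      rw [this, hσF]
    | add y z hy hz ihy ihz =>
      rw [τ'.map_add, ihy, ihz, ← σ.map_add]
      have : (⟨y, hy⟩ : K) + ⟨z, hz⟩ = ⟨y + z, add_mem hy hz⟩ := Subtype.ext rfl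
      rw [this]
    | inv y hy ih =>
      by_cases h0 : y = 0
      · subst h0
        have h1 : ((0 : L))⁻¹ = (0 : L) := inv_zero
        have h2 : (⟨(0:L)⁻¹, inv_mem hy⟩ : K) = 0 := Subtype.ext (by simp)
        rw [h2, σ.map_zero]
        rw [show τ' (0:L)⁻¹ = τ' 0 from by rw [h1], τ'.map_zero]
      · have hK1 : (⟨y, hy⟩ : K) * ⟨y⁻¹, inv_mem hy⟩ = 1 :=
          Subtype.ext (by simp [mul_inv_cancel₀ h0])
        have e1 : τ' y * τ' y⁻¹ = 1 := by
          rw [← τ'.map_mul, mul_inv_cancel₀ h0, τ'.map_one]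
        have e2 : τ' y * σ ⟨y⁻¹, inv_mem hy⟩ = 1 := by
          rw [ih, ← σ.map_mul, hK1, σ.map_one]
        exact hd_inv_uniq e1 e2
    | mul y z hy hz ihy ihz =>
      rw [τ'.map_mul, ihy, ihz, ← σ.map_mul]
      have : (⟨y, hy⟩ : K) * ⟨z, hz⟩ = ⟨y * z, mul_mem hy hz⟩ := Subtype.ext rfl
      rw [this]
end

section
/- Let (L, θ) be a field of prime characteristic p equipped with a higher derivation, and let ℓ ∈ ℕ. Then the set of all elements x ∈ L such that θ^(i)(θ^(j)(x)) = binom(i+j, i)·θ^(i+j)(x) holds for all i, j ≥ 0 with i + j < p^ℓ is a subfield of L. (The same holds for the set of x for which these identities hold for all i, j ≥ 0 without restriction.) -/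
set_option maxHeartbeats 1000000

/-- `hdCoeff θ n r = θ^(n)(r)`, the coefficient of `T^n` in `θ r`. -/
noncomputable def hdCoeff {R : Type*} [CommRing R] (θ : R →+* PowerSeries R) (n : ℕ) :
    R → R := fun r => PowerSeries.coeff (R := R) n (θ r)

open Finset PowerSeries

section Aux

variable {L : Type*} [Field L]

/-- The equalizer of two ring homomorphisms out of a field is a subfield. -/
def eqSubfield {S : Type*} [CommRing S] (f g : L →+* S) : Subfield L where
  carrier := {x | f x = g x}
  zero_mem' := by simp
  one_mem' := by simp
  add_mem' := by
    intro a b ha hb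
    simp only [Set.mem_setOf_eq, map_add] at *
    rw [ha, hb]
  neg_mem' := by
    intro a ha
    simp only [Set.mem_setOf_eq, map_neg] at *
    rw [ha]
  mul_mem' := by
    intro a b ha hb
    simp only [Set.mem_setOf_eq, map_mul] at *
    rw [ha, hb]
  inv_mem' := by
    intro a ha
    by_cases h : a = 0
    · simp [h]
    · simp only [Set.mem_setOf_eq] at *
      have hf : f a⁻¹ * f a = 1 := by
        rw [← map_mul, inv_mul_cancel₀ h, map_one]
      have hg : g a * g a⁻¹ = 1 := by
        rw [← map_mul, mul_inv_cancel₀ h, map_one]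
      calc f a⁻¹ = f a⁻¹ * (g a * g a⁻¹) := by rw [hg, mul_one]
        _ = (f a⁻¹ * f a) * g a⁻¹ := by rw [← ha]; ring
        _ = g a⁻¹ := by rw [hf, one_mul]

@[simp] lemma mem_eqSubfield {S : Type*} [CommRing S] (f g : L →+* S) (x : L) :
    x ∈ eqSubfield f g ↔ f x = g x := Iff.rfl

/-- Vandermonde-type rearrangement of a double antidiagonal sum. -/
lemma vandermonde_sum (a b : ℕ → L) (i j : ℕ) :
    ∑ q ∈ antidiagonal j, ∑ r ∈ antidiagonal i,
      ((((r.1 + q.1).choose r.1 : ℕ) : L) * a (r.1 + q.1)) *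
        ((((r.2 + q.2).choose r.2 : ℕ) : L) * b (r.2 + q.2)) =
    (((i + j).choose i : ℕ) : L) * ∑ s ∈ antidiagonal (i + j), a s.1 * b s.2 := by
  rw [Finset.mul_sum]
  have hrhs : ∀ s ∈ antidiagonal (i + j),
      (((i + j).choose i : ℕ) : L) * (a s.1 * b s.2) =
      ∑ r ∈ antidiagonal i,
        (((s.1.choose r.1 : ℕ) : L) * a s.1) * (((s.2.choose r.2 : ℕ) : L) * b s.2) := by
    intro s hs
    rw [HasAntidiagonal.mem_antidiagonal] at hs
    have : (i + j).choose i = ∑ r ∈ antidiagonal i, s.1.choose r.1 * s.2.choose r.2 := by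
      rw [← hs, Nat.add_choose_eq]
    rw [this]
    push_cast
    rw [Finset.sum_mul]
    refine Finset.sum_congr rfl fun r _ => by ring
  rw [Finset.sum_congr rfl hrhs]
  -- turn double sums into sums over products
  rw [← Finset.sum_product', ← Finset.sum_product']
  -- reindex
  refine Finset.sum_of_injOn
    (fun p => ((p.2.1 + p.1.1, p.2.2 + p.1.2), p.2)) ?_ ?_ ?_ ?_
  · intro p hp p' hp' h
    simp only [Finset.coe_product, Set.mem_prod, mem_coe, HasAntidiagonal.mem_antidiagonal] at hp hp'
    simp only [Prod.ext_iff] at h ⊢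
    omega
  · intro p hp
    simp only [Finset.coe_product, Set.mem_prod, mem_coe, HasAntidiagonal.mem_antidiagonal] at hp ⊢
    omega
  · intro p hp hnp
    rw [mem_product, HasAntidiagonal.mem_antidiagonal, HasAntidiagonal.mem_antidiagonal] at hp
    by_cases h1 : p.2.1 ≤ p.1.1
    · by_cases h2 : p.2.2 ≤ p.1.2
      · exfalso
        apply hnp
        refine ⟨((p.1.1 - p.2.1, p.1.2 - p.2.2), p.2), ?_, ?_⟩
        · simp only [Finset.coe_product, Set.mem_prod, mem_coe, HasAntidiagonal.mem_antidiagonal]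
          omega
        · refine Prod.ext (Prod.ext ?_ ?_) rfl
          · show p.2.1 + (p.1.1 - p.2.1) = p.1.1
            omega
          · show p.2.2 + (p.1.2 - p.2.2) = p.1.2
            omega
      · have : p.1.2 < p.2.2 := by omega
        rw [Nat.choose_eq_zero_of_lt this]
        push_cast
        ring
    · have : p.1.1 < p.2.1 := by omega
      rw [Nat.choose_eq_zero_of_lt this]
      push_cast
      ring
  · intro p hp
    rfl

variable (θ : L →+* PowerSeries L)

/-- `Φ x` has `(i,j)` coefficient `θ^(i)(θ^(j)(x))`. -/
noncomputable def hdPhi : L →+* PowerSeries (PowerSeries L) :=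
  (PowerSeries.map θ).comp θ

lemma coeff_coeff_hdPhi (x : L) (i j : ℕ) :
    coeff (R := L) i (coeff (R := PowerSeries L) j (hdPhi θ x)) =
      hdCoeff θ i (hdCoeff θ j x) := by
  simp [hdPhi, hdCoeff, PowerSeries.coeff_map]

/-- coefficient of products in `L[[T₁]][[T₂]]`, twice unfolded. -/
lemma coeff_coeff_mul (F G : PowerSeries (PowerSeries L)) (i j : ℕ) :
    coeff (R := L) i (coeff (R := PowerSeries L) j (F * G)) =
      ∑ q ∈ antidiagonal j, ∑ r ∈ antidiagonal i,
        coeff (R := L) r.1 (coeff (R := PowerSeries L) q.1 F) *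
          coeff (R := L) r.2 (coeff (R := PowerSeries L) q.2 G) := by
  rw [PowerSeries.coeff_mul, map_sum]
  exact Finset.sum_congr rfl fun q _ => PowerSeries.coeff_mul _ _ _

/-- `Ψ x` has `(i,j)` coefficient `binom(i+j,i) θ^(i+j)(x)`. -/
noncomputable def hdPsi : L →+* PowerSeries (PowerSeries L) where
  toFun x := PowerSeries.mk fun j => PowerSeries.mk fun i =>
    (((i + j).choose i : ℕ) : L) * coeff (R := L) (i + j) (θ x)
  map_zero' := by
    apply PowerSeries.ext
    intro j
    apply PowerSeries.ext
    intro i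
    simp
  map_one' := by
    apply PowerSeries.ext
    intro j
    apply PowerSeries.ext
    intro i
    simp only [coeff_mk, map_one, PowerSeries.coeff_one]
    by_cases hj : j = 0
    · subst hj
      by_cases hi : i = 0
      · subst hi; simp
      · rw [if_pos rfl, if_neg (by omega)]
        simp [PowerSeries.coeff_one, hi]
    · rw [if_neg hj, if_neg (by omega)]
      simp
  map_add' := by
    intro x y
    apply PowerSeries.ext
    intro j
    apply PowerSeries.ext
    intro i
    simp [mul_add]
  map_mul' := by
    intro x y
    apply PowerSeries.ext
    intro j
    apply PowerSeries.ext
    intro i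
    rw [coeff_coeff_mul]
    simp only [coeff_mk, map_mul, PowerSeries.coeff_mul]
    rw [← vandermonde_sum (fun u => coeff (R := L) u (θ x)) (fun v => coeff (R := L) v (θ y)) i j]

lemma coeff_coeff_hdPsi (x : L) (i j : ℕ) :
    coeff (R := L) i (coeff (R := PowerSeries L) j (hdPsi θ x)) =
      (((i + j).choose i : ℕ) : L) * hdCoeff θ (i + j) x := by
  simp [hdPsi, hdCoeff]

/-- single-sum version of `coeff_coeff_mul`. -/
lemma coeff_coeff_mul' (F G : PowerSeries (PowerSeries L)) (i j : ℕ) :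
    coeff (R := L) i (coeff (R := PowerSeries L) j (F * G)) =
      ∑ p ∈ antidiagonal j ×ˢ antidiagonal i,
        coeff (R := L) p.2.1 (coeff (R := PowerSeries L) p.1.1 F) *
          coeff (R := L) p.2.2 (coeff (R := PowerSeries L) p.1.2 G) := by
  rw [coeff_coeff_mul, ← Finset.sum_product']

lemma hdCoeff_zero (hθ : IsHigherDerivation θ) (r : L) : hdCoeff θ 0 r = r := by
  rw [hdCoeff, PowerSeries.coeff_zero_eq_constantCoeff]
  exact hθ r

lemma coeff_zero_zero_hdPhi (hθ : IsHigherDerivation θ) (x : L) :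
    coeff (R := L) 0 (coeff (R := PowerSeries L) 0 (hdPhi θ x)) = x := by
  rw [coeff_coeff_hdPhi, hdCoeff_zero θ hθ, hdCoeff_zero θ hθ]

lemma coeff_zero_zero_hdPsi (hθ : IsHigherDerivation θ) (x : L) :
    coeff (R := L) 0 (coeff (R := PowerSeries L) 0 (hdPsi θ x)) = x := by
  rw [coeff_coeff_hdPsi]
  simp [hdCoeff_zero θ hθ]

/-- key induction for inverse closure in the truncated case. -/
lemma hd_inv_aux (hθ : IsHigherDerivation θ) (N : ℕ) (a : L) (h0 : a ≠ 0)
    (ha : ∀ i j : ℕ, i + j < N →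
      coeff (R := L) i (coeff (R := PowerSeries L) j (hdPhi θ a)) =
        coeff (R := L) i (coeff (R := PowerSeries L) j (hdPsi θ a))) :
    ∀ n : ℕ, ∀ i j : ℕ, i + j = n → i + j < N →
      coeff (R := L) i (coeff (R := PowerSeries L) j (hdPhi θ a⁻¹)) =
        coeff (R := L) i (coeff (R := PowerSeries L) j (hdPsi θ a⁻¹)) := by
  intro n
  induction n using Nat.strong_induction_on with
  | _ n ih =>
    intro i j hn hij
    have hFF : hdPhi θ a * hdPhi θ a⁻¹ = 1 := by
      rw [← map_mul, mul_inv_cancel₀ h0, map_one]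
    have hGG : hdPsi θ a * hdPsi θ a⁻¹ = 1 := by
      rw [← map_mul, mul_inv_cancel₀ h0, map_one]
    have h1 : coeff (R := L) i (coeff (R := PowerSeries L) j (hdPhi θ a * hdPhi θ a⁻¹)) =
        coeff (R := L) i (coeff (R := PowerSeries L) j (hdPsi θ a * hdPsi θ a⁻¹)) := by
      rw [hFF, hGG]
    rw [coeff_coeff_mul', coeff_coeff_mul'] at h1
    set p0 : (ℕ × ℕ) × (ℕ × ℕ) := ((0, j), (0, i)) with hp0def
    have hp0 : p0 ∈ antidiagonal j ×ˢ antidiagonal i := by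
      simp [hp0def, mem_product]
    rw [← Finset.sum_erase_add _ _ hp0, ← Finset.sum_erase_add _ _ hp0] at h1
    have hsum : ∑ p ∈ (antidiagonal j ×ˢ antidiagonal i).erase p0,
        coeff (R := L) p.2.1 (coeff (R := PowerSeries L) p.1.1 (hdPhi θ a)) *
          coeff (R := L) p.2.2 (coeff (R := PowerSeries L) p.1.2 (hdPhi θ a⁻¹)) =
        ∑ p ∈ (antidiagonal j ×ˢ antidiagonal i).erase p0,
        coeff (R := L) p.2.1 (coeff (R := PowerSeries L) p.1.1 (hdPsi θ a)) *
          coeff (R := L) p.2.2 (coeff (R := PowerSeries L) p.1.2 (hdPsi θ a⁻¹)) := by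
      refine Finset.sum_congr rfl fun p hp => ?_
      have hps := Finset.mem_of_mem_erase hp
      have hpne := Finset.ne_of_mem_erase hp
      rw [mem_product, HasAntidiagonal.mem_antidiagonal, HasAntidiagonal.mem_antidiagonal] at hps
      have hlt : p.2.2 + p.1.2 < n := by
        rcases lt_or_ge (p.2.2 + p.1.2) n with h | h
        · exact h
        · exfalso
          have e1 : p.2.2 = i ∧ p.1.2 = j := by omega
          have e2 : p.2.1 = 0 ∧ p.1.1 = 0 := by omega
          apply hpne
          rw [hp0def]
          exact Prod.ext (Prod.ext e2.2 e1.2) (Prod.ext e2.1 e1.1)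
      rw [ha p.2.1 p.1.1 (by omega),
        ih _ hlt p.2.2 p.1.2 rfl (by omega)]
    rw [hsum] at h1
    have h2 := add_left_cancel h1
    rw [hp0def] at h2
    simp only [coeff_zero_zero_hdPhi θ hθ, coeff_zero_zero_hdPsi θ hθ] at h2
    exact mul_left_cancel₀ h0 h2

/-- the truncated equalizer subfield. -/
noncomputable def bdSubfield (hθ : IsHigherDerivation θ) (N : ℕ) : Subfield L where
  carrier := {x | ∀ i j : ℕ, i + j < N →
    coeff (R := L) i (coeff (R := PowerSeries L) j (hdPhi θ x)) =
      coeff (R := L) i (coeff (R := PowerSeries L) j (hdPsi θ x))}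
  zero_mem' := by intro i j _; rw [map_zero (hdPhi θ), map_zero (hdPsi θ)]
  one_mem' := by intro i j _; rw [map_one (hdPhi θ), map_one (hdPsi θ)]
  add_mem' := by
    intro a b ha hb i j hij
    simp only [map_add]
    rw [ha i j hij, hb i j hij]
  neg_mem' := by
    intro a ha i j hij
    simp only [map_neg]
    rw [ha i j hij]
  mul_mem' := by
    intro a b ha hb i j hij
    rw [map_mul (hdPhi θ), map_mul (hdPsi θ), coeff_coeff_mul, coeff_coeff_mul]
    refine Finset.sum_congr rfl fun q hq => Finset.sum_congr rfl fun r hr => ?_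
    rw [HasAntidiagonal.mem_antidiagonal] at hq hr
    rw [ha r.1 q.1 (by omega), hb r.2 q.2 (by omega)]
  inv_mem' := by
    intro a ha
    by_cases h0 : a = 0
    · intro i j hij
      rw [h0, inv_zero, map_zero (hdPhi θ), map_zero (hdPsi θ)]
    · intro i j hij
      exact hd_inv_aux θ hθ N a h0 ha (i + j) i j rfl hij

lemma mem_bdSubfield (hθ : IsHigherDerivation θ) (N : ℕ) (x : L) :
    x ∈ bdSubfield θ hθ N ↔ ∀ i j : ℕ, i + j < N →
      coeff (R := L) i (coeff (R := PowerSeries L) j (hdPhi θ x)) =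
        coeff (R := L) i (coeff (R := PowerSeries L) j (hdPsi θ x)) := Iff.rfl

end Aux

/-- for a field `L` of prime characteristic `p` with a higher derivation `θ`
and `ℓ ∈ ℕ`, the set of `x ∈ L` such that
`θ^(i)(θ^(j)(x)) = binom(i+j,i)·θ^(i+j)(x)` for all `i + j < p^ℓ` is a subfield of `L`;
likewise for the set of `x` for which these identities hold for all `i, j ≥ 0`. -/
theorem torsion_group_schemes_stmt_5 {L : Type*} [Field L] (p : ℕ) [Fact p.Prime]
    [CharP L p] (θ : L →+* PowerSeries L) (hθ : IsHigherDerivation θ) (ℓ : ℕ) :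
    (∃ K : Subfield L, (K : Set L) =
      {x : L | ∀ i j : ℕ, i + j < p ^ ℓ →
        hdCoeff θ i (hdCoeff θ j x) = ((i + j).choose i : L) * hdCoeff θ (i + j) x}) ∧
    (∃ K : Subfield L, (K : Set L) =
      {x : L | ∀ i j : ℕ,
        hdCoeff θ i (hdCoeff θ j x) = ((i + j).choose i : L) * hdCoeff θ (i + j) x}) := by
  constructor
  · refine ⟨bdSubfield θ hθ (p ^ ℓ), ?_⟩
    ext x
    simp only [SetLike.mem_coe, mem_bdSubfield, Set.mem_setOf_eq]
    constructor
    · intro h i j hij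
      have := h i j hij
      rwa [coeff_coeff_hdPhi, coeff_coeff_hdPsi] at this
    · intro h i j hij
      rw [coeff_coeff_hdPhi, coeff_coeff_hdPsi]
      exact h i j hij
  · refine ⟨eqSubfield (hdPhi θ) (hdPsi θ), ?_⟩
    ext x
    simp only [SetLike.mem_coe, mem_eqSubfield, Set.mem_setOf_eq]
    constructor
    · intro h i j
      rw [← coeff_coeff_hdPhi, ← coeff_coeff_hdPsi, h]
    · intro h
      apply PowerSeries.ext
      intro j
      apply PowerSeries.ext
      intro i
      rw [coeff_coeff_hdPhi, coeff_coeff_hdPsi]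
      exact h i j
end
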